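/- For every real z > 0 and every real ε ≠ 0, the contour-shifted Gaussian integral with a double pole evaluates as ∫_{−∞}^{∞} (x+iε)^{−2} · exp(−(x+iε)²/(2z)) dx = −√(2π/z). In particular (taking z = 1/2) the regularized integral of s^{−2}e^{−s²} along the real line deformed to avoid 0 equals −2√π. -/

import Mathlib

open MeasureTheory Complex Filter Real

noncomputable section

namespace ShiftedGaussianAux

variable (z ε : ℝ)

/-- The complex coefficient in the exponent. -/
def b (z : ℝ) : ℂ := (2 * (z : ℂ))⁻¹

lemma b_re (hz : 0 < z) : 0 < (b z).re := by
  simp [b, ← Complex.ofReal_ofNat, ← Complex.ofReal_mul, ← Complex.ofReal_inv]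
  positivity

lemma ne_zero (hε : ε ≠ 0) (x : ℝ) : (x : ℂ) + (ε : ℂ) * Complex.I ≠ 0 := by
  intro h
  have : ((x : ℂ) + (ε : ℂ) * Complex.I).im = 0 := by rw [h]; simp
  simp at this
  exact hε this

lemma abs_ge (x : ℝ) : |ε| ≤ ‖(x : ℂ) + (ε : ℂ) * Complex.I‖ := by
  have := Complex.abs_im_le_norm ((x : ℂ) + (ε : ℂ) * Complex.I)
  simpa using this

/-- Gaussian factor. -/
def E (z ε : ℝ) (x : ℝ) : ℂ := Complex.exp (-(b z) * ((x : ℂ) + (ε : ℂ) * Complex.I) ^ 2)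

lemma hE_int (hz : 0 < z) : Integrable (E z ε) :=
  GaussianFourier.integrable_cexp_neg_mul_sq_add_real_mul_I (b_re z hz) ε

lemma hg_int (hz : 0 < z) (hε : ε ≠ 0) :
    Integrable (fun x : ℝ => ((((x : ℂ) + (ε : ℂ) * Complex.I)) ^ 2)⁻¹ * E z ε x) := by
  apply (hE_int z ε hz).bdd_mul (c := (ε ^ 2)⁻¹)
  · apply Continuous.aestronglyMeasurable
    exact (((Complex.continuous_ofReal.add continuous_const).pow 2).inv₀
      (fun x => pow_ne_zero 2 (ne_zero ε hε x)))
  · refine ae_of_all _ (fun x => ?_)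
    rw [norm_inv, norm_pow]
    have h1 : 0 < |ε| := abs_pos.mpr hε
    have h2 := abs_ge ε x
    rw [show (ε:ℝ)^2 = |ε|^2 from (_root_.sq_abs ε).symm]
    exact inv_anti₀ (by positivity) (pow_le_pow_left₀ h1.le h2 2)

/-- The antiderivative. -/
def F (z ε : ℝ) (x : ℝ) : ℂ :=
  -(((x : ℂ) + (ε : ℂ) * Complex.I))⁻¹ *
    Complex.exp (-(b z) * ((x : ℂ) + (ε : ℂ) * Complex.I) ^ 2)

lemma hasDerivAt_F (hε : ε ≠ 0) (x : ℝ) :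
    HasDerivAt (F z ε)
      ((((x : ℂ) + (ε : ℂ) * Complex.I) ^ 2)⁻¹ * E z ε x + (2 * b z) * E z ε x) x := by
  set s : ℂ := (x : ℂ) + (ε : ℂ) * Complex.I with hs
  have hs0 : s ≠ 0 := ne_zero ε hε x
  have hinner : ∀ w : ℂ, HasDerivAt (fun w : ℂ => w + (ε : ℂ) * Complex.I) 1 w := by
    intro w; simpa using (hasDerivAt_id w).add_const ((ε : ℂ) * Complex.I)
  have h1 : HasDerivAt (fun w : ℂ => (w + (ε : ℂ) * Complex.I)⁻¹)
      (-(s ^ 2)⁻¹ * 1) (x : ℂ) :=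
    (hasDerivAt_inv hs0).comp (x : ℂ) (hinner (x : ℂ))
  have hp : HasDerivAt (fun w : ℂ => -(b z) * (w + (ε : ℂ) * Complex.I) ^ 2)
      (-(b z) * ((2 : ℕ) * s ^ 1 * 1)) (x : ℂ) :=
    (((hasDerivAt_pow 2 s).comp (x : ℂ) (hinner (x : ℂ)))).const_mul (-(b z))
  have h2 : HasDerivAt (fun w : ℂ => Complex.exp (-(b z) * (w + (ε : ℂ) * Complex.I) ^ 2))
      (Complex.exp (-(b z) * s ^ 2) * (-(b z) * ((2 : ℕ) * s ^ 1 * 1))) (x : ℂ) := hp.cexp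
  have hmul := (h1.neg.mul h2).comp_ofReal
  convert hmul using 1
  · rfl
  simp only [E, ← hs, Pi.neg_apply]
  have hexp := Complex.exp_ne_zero (-(b z) * s ^ 2)
  field_simp
  ring

lemma tendsto_F_zero (hz : 0 < z) (hε : ε ≠ 0) {l : Filter ℝ}
    (hl : Tendsto (fun x : ℝ => x ^ 2) l atTop) :
    Tendsto (F z ε) l (nhds 0) := by
  rw [tendsto_zero_iff_norm_tendsto_zero]
  apply squeeze_zero (fun x => norm_nonneg _)
    (g := fun x => |ε|⁻¹ * Real.exp ((2 * z)⁻¹ * (ε ^ 2 - x ^ 2)))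
  · intro x
    have habs : |ε| ≤ ‖(x : ℂ) + (ε : ℂ) * Complex.I‖ := abs_ge ε x
    have hεpos : 0 < |ε| := abs_pos.mpr hε
    rw [F, norm_mul, norm_neg, norm_inv,
      Complex.norm_exp]
    have hre : (-(b z) * ((x : ℂ) + (ε : ℂ) * Complex.I) ^ 2).re
        = (2 * z)⁻¹ * (ε ^ 2 - x ^ 2) := by
      have hb : (b z) = ((2 * z)⁻¹ : ℝ) := by
        simp [b, ← Complex.ofReal_ofNat, ← Complex.ofReal_mul, ← Complex.ofReal_inv]
      rw [hb]
      simp [Complex.mul_re, Complex.add_re, Complex.add_im, pow_two]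
      ring
    rw [hre]
    gcongr
  · rw [show (0 : ℝ) = |ε|⁻¹ * 0 by ring]
    apply Tendsto.const_mul
    apply Real.tendsto_exp_atBot.comp
    have : Tendsto (fun x : ℝ => ε ^ 2 - x ^ 2) l atBot := by
      apply tendsto_atBot_add_const_left
      exact (tendsto_neg_atBot_iff).mpr hl
    have h2z : 0 < (2 * z)⁻¹ := by positivity
    simpa [mul_comm] using this.const_mul_atBot h2z

lemma key (hz : 0 < z) (hε : ε ≠ 0) :
    ∫ x : ℝ, ((((x : ℂ) + (ε : ℂ) * Complex.I)) ^ 2)⁻¹ * E z ε x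
      = -(Real.sqrt (2 * Real.pi / z) : ℂ) := by
  have hEint := hE_int z ε hz
  have hgint := hg_int z ε hz hε
  have hfint : Integrable (fun x : ℝ =>
      ((((x : ℂ) + (ε : ℂ) * Complex.I)) ^ 2)⁻¹ * E z ε x + (2 * b z) * E z ε x) :=
    hgint.add (hEint.const_mul _)
  have hTop : Filter.Tendsto (fun x : ℝ => x ^ 2) atTop atTop :=
    tendsto_pow_atTop (by norm_num)
  have hBot : Filter.Tendsto (fun x : ℝ => x ^ 2) atBot atTop :=
    (hTop.comp tendsto_neg_atBot_atTop).congr (fun x => by simp)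
  have hFTC := integral_of_hasDerivAt_of_tendsto (f := F z ε)
    (fun x => hasDerivAt_F z ε hε x) hfint
    (tendsto_F_zero z ε hz hε hBot)
    (tendsto_F_zero z ε hz hε hTop)
  rw [sub_zero] at hFTC
  have hsplit : ∫ x : ℝ, (((((x : ℂ) + (ε : ℂ) * Complex.I)) ^ 2)⁻¹ * E z ε x
      + (2 * b z) * E z ε x) =
      (∫ x : ℝ, ((((x : ℂ) + (ε : ℂ) * Complex.I)) ^ 2)⁻¹ * E z ε x)
      + (2 * b z) * ∫ x : ℝ, E z ε x := by
    rw [integral_add hgint (hEint.const_mul _), integral_const_mul]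
  have hGauss : ∫ x : ℝ, E z ε x = ((Real.pi / (b z).re : ℝ) : ℂ) ^ (1 / 2 : ℂ) := by
    simp only [E]
    rw [GaussianFourier.integral_cexp_neg_mul_sq_add_real_mul_I (b_re z hz) ε]
    congr 1
    have hb : (b z) = ((2 * z)⁻¹ : ℝ) := by
      simp [b, ← Complex.ofReal_ofNat, ← Complex.ofReal_mul, ← Complex.ofReal_inv]
    rw [hb, Complex.ofReal_re]
    push_cast
    ring
  rw [hsplit] at hFTC
  have hbval : (2 * b z) = ((z⁻¹ : ℝ) : ℂ) := by
    have hzc : (z : ℂ) ≠ 0 := Complex.ofReal_ne_zero.mpr hz.ne'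
    rw [b, Complex.ofReal_inv, mul_inv, ← mul_assoc, mul_inv_cancel₀ two_ne_zero, one_mul]
  have h0 : (∫ x : ℝ, ((((x : ℂ) + (ε : ℂ) * Complex.I)) ^ 2)⁻¹ * E z ε x)
      = -((2 * b z) * ∫ x : ℝ, E z ε x) := by linear_combination hFTC
  rw [h0, hGauss, hbval]
  have hbre : (b z).re = (2 * z)⁻¹ := by
    have hb : (b z) = ((2 * z)⁻¹ : ℝ) := by
      simp [b, ← Complex.ofReal_ofNat, ← Complex.ofReal_mul, ← Complex.ofReal_inv]
    rw [hb]; simp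
  rw [hbre]
  have hval : Real.pi / (2 * z)⁻¹ = 2 * Real.pi * z := by
    field_simp
  rw [hval]
  have hcpow : (((2 * Real.pi * z : ℝ)) : ℂ) ^ (1 / 2 : ℂ)
      = ((Real.sqrt (2 * Real.pi * z) : ℝ) : ℂ) := by
    rw [show (1/2 : ℂ) = ((1/2 : ℝ) : ℂ) by norm_num,
      ← Complex.ofReal_cpow (by positivity), Real.sqrt_eq_rpow]
  rw [hcpow]
  have hsq : Real.sqrt (2 * Real.pi / z) = z⁻¹ * Real.sqrt (2 * Real.pi * z) := by
    rw [show (2 * Real.pi * z) = (2 * Real.pi / z) * z ^ 2 by field_simp,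
      Real.sqrt_mul (by positivity), Real.sqrt_sq hz.le]
    field_simp
  rw [hsq]
  push_cast
  ring

end ShiftedGaussianAux

end

/-- The contour-shifted Gaussian integral with a double pole:
`∫_{−∞}^{∞} (x+iε)^{−2}·exp(−(x+iε)²/(2z)) dx = −√(2π/z)` for real `z > 0` and real `ε ≠ 0`;
in particular (taking `z = 1/2`) the regularized integral of `s^{−2}e^{−s²}` along the real
line deformed to avoid `0` equals `−2√π`. -/
theorem shifted_gaussian_double_pole_integral :
    (∀ (z ε : ℝ), 0 < z → ε ≠ 0 →
      ∫ x : ℝ, (((x : ℂ) + (ε : ℂ) * Complex.I) ^ 2)⁻¹ *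
          Complex.exp (-((x : ℂ) + (ε : ℂ) * Complex.I) ^ 2 / (2 * (z : ℂ))) =
        -(Real.sqrt (2 * Real.pi / z) : ℂ)) ∧
    (∀ ε : ℝ, ε ≠ 0 →
      ∫ x : ℝ, (((x : ℂ) + (ε : ℂ) * Complex.I) ^ 2)⁻¹ *
          Complex.exp (-((x : ℂ) + (ε : ℂ) * Complex.I) ^ 2) =
        -2 * (Real.sqrt Real.pi : ℂ)) := by
  have main : ∀ (z ε : ℝ), 0 < z → ε ≠ 0 →
      ∫ x : ℝ, (((x : ℂ) + (ε : ℂ) * Complex.I) ^ 2)⁻¹ *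
          Complex.exp (-((x : ℂ) + (ε : ℂ) * Complex.I) ^ 2 / (2 * (z : ℂ))) =
        -(Real.sqrt (2 * Real.pi / z) : ℂ) := by
    intro z ε hz hε
    have := ShiftedGaussianAux.key z ε hz hε
    rw [← this]
    congr 1
    funext x
    congr 1
    rw [ShiftedGaussianAux.E, ShiftedGaussianAux.b]
    congr 1
    rw [neg_div, div_eq_mul_inv]
    ring
  refine ⟨main, fun ε hε => ?_⟩
  have := main (1/2) ε (by norm_num) hε
  have h1 : (2 : ℂ) * ((1/2 : ℝ) : ℂ) = 1 := by norm_num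
  rw [h1] at this
  simp only [div_one] at this
  rw [this]
  have : Real.sqrt (2 * Real.pi / (1/2)) = 2 * Real.sqrt Real.pi := by
    rw [show 2 * Real.pi / (1/2 : ℝ) = 2 ^ 2 * Real.pi by ring,
      Real.sqrt_mul (by positivity), Real.sqrt_sq (by norm_num)]
  rw [this]
  push_cast
  ring
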